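/- Let (P, ≤) be a Priestley space with Thomason derivative operation δ and Thomason height function ht. Then: (a) if p < q in P and ht(q) is an ordinal, then ht(p) is an ordinal and ht(p) < ht(q); (b) if S ⊆ P is a closed subset and a ∈ S is not an isolated point of the subspace S and ht(a) is an ordinal, then there exists s ∈ S with ht(s) an ordinal and ht(s) < ht(a). Consequently, if the Thomason filtration of P is exhaustive, then ht is a dispersion on P. -/

import Mathlib

section Thomason

variable {P : Type*} [TopologicalSpace P] [PartialOrder P]

/-- A Thomason point of a subset `A` of an ordered topological space: a point of `A` which is
both topologically isolated in the subspace `A` and minimal in `A` for the order. -/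
def IsThomasonPointIn (A : Set P) (p : P) : Prop :=
  p ∈ A ∧ (∃ U : Set P, IsOpen U ∧ U ∩ A = {p}) ∧ ∀ q ∈ A, q ≤ p → q = p

/-- The Thomason derivative: remove all Thomason points. -/
def thomDeriv (A : Set P) : Set P := {p ∈ A | ¬ IsThomasonPointIn A p}

/-- The transfinite iterates of the Thomason derivative, starting from the whole space:
`δ⁰P = P`, `δ^{λ+1}P = δ(δ^λ P)`, and intersections at limit stages. -/
noncomputable def thomIter (P : Type*) [TopologicalSpace P] [PartialOrder P]
    (lam : Ordinal) : Set P :=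
  Ordinal.limitRecOn lam Set.univ (fun _ ih => thomDeriv ih)
    (fun o _ ih => ⋂ (o' : Ordinal), ⋂ (h : o' < o), ih o' h)

/-- `p` has Thomason height `λ` when `p ∈ δ^λ P \ δ^{λ+1} P`. -/
def HasThomasonHeight (p : P) (lam : Ordinal) : Prop :=
  p ∈ thomIter P lam ∧ p ∉ thomIter P (lam + 1)

end Thomason

section AuxThomason

variable {P : Type*} [TopologicalSpace P] [PartialOrder P]

lemma thomIter_zero : thomIter P 0 = Set.univ := by
  simp [thomIter]

lemma thomIter_succ (lam : Ordinal) :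
    thomIter P (lam + 1) = thomDeriv (thomIter P lam) := by
  rw [thomIter, Ordinal.add_one_eq_succ, Ordinal.limitRecOn_succ]
  rfl

lemma thomIter_limit {lam : Ordinal} (h : Order.IsSuccLimit lam) :
    thomIter P lam = ⋂ (o' : Ordinal), ⋂ (_ : o' < lam), thomIter P o' := by
  rw [thomIter, Ordinal.limitRecOn_limit _ _ _ _ h]
  rfl

lemma thomIter_antitone : ∀ lam μ : Ordinal, μ ≤ lam → thomIter P lam ⊆ thomIter P μ := by
  intro lam
  induction lam using Ordinal.induction with
  | h lam ih =>
    intro μ hμ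
    rcases eq_or_lt_of_le hμ with rfl | hlt
    · exact subset_rfl
    rcases Ordinal.zero_or_succ_or_isSuccLimit lam with h0 | ⟨κ, rfl⟩ | hl
    · exact absurd (h0 ▸ hlt) (not_lt_of_ge (zero_le (a := μ)))
    · rw [← Ordinal.add_one_eq_succ, thomIter_succ]
      intro x hx
      exact ih κ (Order.lt_succ κ) μ (Order.lt_succ_iff.mp hlt) hx.1
    · rw [thomIter_limit hl]
      intro x hx
      exact Set.mem_iInter.mp (Set.mem_iInter.mp hx μ) hlt

lemma height_unique {p : P} {μ ν : Ordinal}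
    (hμ : HasThomasonHeight p μ) (hν : HasThomasonHeight p ν) : μ = ν := by
  by_contra hne
  rcases lt_or_gt_of_ne hne with h | h
  · exact hμ.2 (thomIter_antitone ν (μ + 1)
      (by rw [Ordinal.add_one_eq_succ]; exact Order.succ_le_of_lt h) hν.1)
  · exact hν.2 (thomIter_antitone μ (ν + 1)
      (by rw [Ordinal.add_one_eq_succ]; exact Order.succ_le_of_lt h) hμ.1)

lemma exists_height_of_not_mem {p : P} :
    ∀ μ : Ordinal, p ∉ thomIter P μ → ∃ ν : Ordinal, HasThomasonHeight p ν ∧ ν < μ := by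
  intro μ
  induction μ using Ordinal.induction with
  | h μ ih =>
    intro hp
    rcases Ordinal.zero_or_succ_or_isSuccLimit μ with rfl | ⟨κ, rfl⟩ | hl
    · rw [thomIter_zero] at hp
      exact absurd (Set.mem_univ p) hp
    · by_cases hκ : p ∈ thomIter P κ
      · refine ⟨κ, ⟨hκ, ?_⟩, ?_⟩
        · rwa [Ordinal.add_one_eq_succ]
        · rw [← Ordinal.add_one_eq_succ] at *
          exact lt_add_one κ
      · obtain ⟨ν, hν, hlt⟩ := ih κ (Order.lt_succ κ) hκ
        exact ⟨ν, hν, hlt.trans (Order.lt_succ κ)⟩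
    · rw [thomIter_limit hl] at hp
      simp only [Set.mem_iInter, not_forall] at hp
      obtain ⟨o', ho', hno⟩ := hp
      obtain ⟨ν, hν, hlt⟩ := ih o' ho' hno
      exact ⟨ν, hν, hlt.trans ho'⟩

lemma thomasonPoint_of_height {p : P} {μ : Ordinal} (h : HasThomasonHeight p μ) :
    IsThomasonPointIn (thomIter P μ) p := by
  have h2 := h.2
  rw [thomIter_succ] at h2
  simp only [thomDeriv, Set.mem_setOf_eq, not_and, not_not] at h2
  exact h2 h.1

lemma partA {p q : P} (hpq : p < q) (μ : Ordinal) (hq : HasThomasonHeight q μ) :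
    ∃ ν : Ordinal, HasThomasonHeight p ν ∧ ν < μ := by
  have hmin := (thomasonPoint_of_height hq).2.2
  have hp : p ∉ thomIter P μ := fun hp => absurd (hmin p hp hpq.le) hpq.ne
  exact exists_height_of_not_mem μ hp

lemma partB (S : Set P) {a : P} (haS : a ∈ S)
    (hnis : ¬ ∃ U : Set P, IsOpen U ∧ U ∩ S = {a})
    (μ : Ordinal) (ha : HasThomasonHeight a μ) :
    ∃ s ∈ S, ∃ ν : Ordinal, HasThomasonHeight s ν ∧ ν < μ := by
  by_cases hsub : ∃ s ∈ S, s ∉ thomIter P μ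
  · obtain ⟨s, hsS, hs⟩ := hsub
    obtain ⟨ν, hν, hlt⟩ := exists_height_of_not_mem μ hs
    exact ⟨s, hsS, ν, hν, hlt⟩
  · push_neg at hsub
    obtain ⟨-, ⟨U, hU, hUeq⟩, -⟩ := thomasonPoint_of_height ha
    have haU : a ∈ U := by
      have : a ∈ U ∩ thomIter P μ := by rw [hUeq]; exact rfl
      exact this.1
    exfalso
    apply hnis
    refine ⟨U, hU, Set.Subset.antisymm ?_ ?_⟩
    · intro x hx
      have : x ∈ U ∩ thomIter P μ := ⟨hx.1, hsub x hx.2⟩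
      rw [hUeq] at this
      exact this
    · intro x hx
      rw [Set.mem_singleton_iff] at hx
      exact hx ▸ ⟨haU, haS⟩

end AuxThomason

/-- Let `(P, ≤)` be a Priestley space with Thomason height function `ht`.
(a) If `p < q` and `ht q` is an ordinal, then `ht p` is an ordinal and `ht p < ht q`.
(b) If `S ⊆ P` is closed, `a ∈ S` is not isolated in the subspace `S`, and `ht a` is an
ordinal, then there is `s ∈ S` whose height is an ordinal smaller than `ht a`.
Consequently, if the Thomason filtration is exhaustive then the Thomason height is a
dispersion on `P`. -/
theorem thomason_height_is_dispersion
    {P : Type*} [TopologicalSpace P] [PartialOrder P] [CompactSpace P]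
    (hsep : ∀ x y : P, ¬ x ≤ y →
      ∃ U : Set P, IsClopen U ∧ (∀ z w : P, z ∈ U → z ≤ w → w ∈ U) ∧ x ∈ U ∧ y ∉ U) :
    (∀ p q : P, p < q → ∀ μ : Ordinal, HasThomasonHeight q μ →
        ∃ ν : Ordinal, HasThomasonHeight p ν ∧ ν < μ) ∧
    (∀ S : Set P, IsClosed S → ∀ a ∈ S, (¬ ∃ U : Set P, IsOpen U ∧ U ∩ S = {a}) →
        ∀ μ : Ordinal, HasThomasonHeight a μ →
          ∃ s ∈ S, ∃ ν : Ordinal, HasThomasonHeight s ν ∧ ν < μ) ∧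
    (∀ h : P → Ordinal, (∀ p : P, HasThomasonHeight p (h p)) →
        (∀ p q : P, p < q → h p < h q) ∧
        (∀ S : Set P, IsClosed S → ∀ a ∈ S,
          (¬ ∃ U : Set P, IsOpen U ∧ U ∩ S = {a}) → ∃ s ∈ S, h s < h a)) := by
  refine ⟨fun p q hpq μ hq => partA hpq μ hq,
    fun S hS a haS hnis μ ha => partB S haS hnis μ ha,
    fun h hh => ⟨?_, ?_⟩⟩
  · intro p q hpq
    obtain ⟨ν, hν, hlt⟩ := partA hpq (h q) (hh q)
    exact (height_unique (hh p) hν) ▸ hlt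
  · intro S hS a haS hnis
    obtain ⟨s, hsS, ν, hν, hlt⟩ := partB S haS hnis (h a) (hh a)
    exact ⟨s, hsS, (height_unique (hh s) hν) ▸ hlt⟩
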